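/- Let S and E be the Euclidean spaces ℝ^n and ℝ^m. Suppose f_π : S → E → S satisfies ‖f_π(s₁,e₁) − f_π(s₂,e₂)‖ ≤ L_f(‖s₁−s₂‖ + ‖e₁−e₂‖) for all s₁,s₂ ∈ S and e₁,e₂ ∈ E, with L_f > 0. Let l, ζ : S → ℝ be Lipschitz with constants L_l and L_ζ, let γ ∈ (0,1) satisfy γ(1 + L_f) < 1, and let V be the discounted reach-avoid value function. Then for every parameter e ∈ E and all states s₁, s₂ ∈ S, |V(s₁,e) − V(s₂,e)| ≤ max(L_l, L_ζ) · ‖s₁ − s₂‖; i.e., for each fixed e, the map s ↦ V(s,e) is Lipschitz with constant max(L_l, L_ζ). -/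

import Mathlib

noncomputable section

/-- The trajectory `ξ_s^e : ℕ → S` from initial state `s` under parameter `e`,
defined by `ξ(0) = s` and `ξ(t+1) = ξ(t) + f_π(ξ(t), e)`. -/
def traj {n m : ℕ}
    (f : EuclideanSpace ℝ (Fin n) → EuclideanSpace ℝ (Fin m) → EuclideanSpace ℝ (Fin n))
    (s : EuclideanSpace ℝ (Fin n)) (e : EuclideanSpace ℝ (Fin m)) :
    ℕ → EuclideanSpace ℝ (Fin n)
  | 0 => s
  | t + 1 => traj f s e t + f (traj f s e t) e

/-- The discounted payoff
`P(s,e,τ) = max(γ^τ · l(ξ_s^e(τ)), max_{κ ∈ {0,…,τ}} γ^κ · ζ(ξ_s^e(κ)))`. -/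
def payoff {n m : ℕ}
    (f : EuclideanSpace ℝ (Fin n) → EuclideanSpace ℝ (Fin m) → EuclideanSpace ℝ (Fin n))
    (l ζ : EuclideanSpace ℝ (Fin n) → ℝ) (γ : ℝ)
    (s : EuclideanSpace ℝ (Fin n)) (e : EuclideanSpace ℝ (Fin m)) (τ : ℕ) : ℝ :=
  max (γ ^ τ * l (traj f s e τ))
    ((Finset.range (τ + 1)).sup' Finset.nonempty_range_add_one
      (fun κ => γ ^ κ * ζ (traj f s e κ)))

/-- The discounted reach-avoid value function `V(s,e) = inf_{τ ∈ ℕ} P(s,e,τ)`. -/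
def raValue {n m : ℕ}
    (f : EuclideanSpace ℝ (Fin n) → EuclideanSpace ℝ (Fin m) → EuclideanSpace ℝ (Fin n))
    (l ζ : EuclideanSpace ℝ (Fin n) → ℝ) (γ : ℝ)
    (s : EuclideanSpace ℝ (Fin n)) (e : EuclideanSpace ℝ (Fin m)) : ℝ :=
  ⨅ τ : ℕ, payoff f l ζ γ s e τ

/-- For each fixed environmental parameter `e`, the discounted reach-avoid value
function `s ↦ V(s,e)` is Lipschitz with constant `max(L_l, L_ζ)`. -/
theorem raValue_lipschitz_in_state {n m : ℕ}
    (f : EuclideanSpace ℝ (Fin n) → EuclideanSpace ℝ (Fin m) → EuclideanSpace ℝ (Fin n))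
    (l ζ : EuclideanSpace ℝ (Fin n) → ℝ) (Lf Ll Lζ γ : ℝ)
    (hLf : 0 < Lf)
    (hf : ∀ (s₁ s₂ : EuclideanSpace ℝ (Fin n)) (e₁ e₂ : EuclideanSpace ℝ (Fin m)),
      ‖f s₁ e₁ - f s₂ e₂‖ ≤ Lf * (‖s₁ - s₂‖ + ‖e₁ - e₂‖))
    (hl : ∀ x y : EuclideanSpace ℝ (Fin n), |l x - l y| ≤ Ll * ‖x - y‖)
    (hζ : ∀ x y : EuclideanSpace ℝ (Fin n), |ζ x - ζ y| ≤ Lζ * ‖x - y‖)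
    (hγ0 : 0 < γ) (hγ1 : γ < 1) (hcontr : γ * (1 + Lf) < 1)
    (e : EuclideanSpace ℝ (Fin m)) (s₁ s₂ : EuclideanSpace ℝ (Fin n)) :
    |raValue f l ζ γ s₁ e - raValue f l ζ γ s₂ e| ≤ max Ll Lζ * ‖s₁ - s₂‖ := by
  rcases eq_or_ne s₁ s₂ with h | h
  · simp [h]
  have hd : 0 < ‖s₁ - s₂‖ := by simpa [sub_eq_zero] using h
  have hLl : 0 ≤ Ll := by
    have h1 := (abs_nonneg (l s₁ - l s₂)).trans (hl s₁ s₂)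
    nlinarith
  have hLζ : 0 ≤ Lζ := by
    have h1 := (abs_nonneg (ζ s₁ - ζ s₂)).trans (hζ s₁ s₂)
    nlinarith
  set C := max Ll Lζ * ‖s₁ - s₂‖ with hC
  have hC0 : 0 ≤ C := mul_nonneg (le_trans hLl (le_max_left _ _)) hd.le
  -- trajectory bound
  have htraj : ∀ t, ‖traj f s₁ e t - traj f s₂ e t‖ ≤ (1 + Lf) ^ t * ‖s₁ - s₂‖ := by
    intro t
    induction t with
    | zero => simp [traj]
    | succ t ih =>
      have h1 : traj f s₁ e (t + 1) - traj f s₂ e (t + 1)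
          = (traj f s₁ e t - traj f s₂ e t)
            + (f (traj f s₁ e t) e - f (traj f s₂ e t) e) := by
        simp only [traj]; abel
      have h2 := hf (traj f s₁ e t) (traj f s₂ e t) e e
      simp only [sub_self, norm_zero, add_zero] at h2
      have h3 : ‖traj f s₁ e (t + 1) - traj f s₂ e (t + 1)‖
          ≤ ‖traj f s₁ e t - traj f s₂ e t‖ + ‖f (traj f s₁ e t) e - f (traj f s₂ e t) e‖ := by
        rw [h1]; exact norm_add_le _ _
      have hpnn : (0:ℝ) ≤ (1 + Lf) ^ t := by positivity
      calc ‖traj f s₁ e (t + 1) - traj f s₂ e (t + 1)‖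
          ≤ ‖traj f s₁ e t - traj f s₂ e t‖ + Lf * ‖traj f s₁ e t - traj f s₂ e t‖ := by
            linarith
        _ = (1 + Lf) * ‖traj f s₁ e t - traj f s₂ e t‖ := by ring
        _ ≤ (1 + Lf) * ((1 + Lf) ^ t * ‖s₁ - s₂‖) := by
            apply mul_le_mul_of_nonneg_left ih; linarith
        _ = (1 + Lf) ^ (t + 1) * ‖s₁ - s₂‖ := by ring
  have hpow : ∀ κ : ℕ, γ ^ κ * (1 + Lf) ^ κ ≤ 1 := by
    intro κ
    rw [← mul_pow]
    exact pow_le_one₀ (by positivity) hcontr.le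
  -- generic bound on discounted Lipschitz terms
  have hterm : ∀ (g : EuclideanSpace ℝ (Fin n) → ℝ) (Lg : ℝ), 0 ≤ Lg →
      (∀ x y, |g x - g y| ≤ Lg * ‖x - y‖) → Lg ≤ max Ll Lζ →
      ∀ κ : ℕ, |γ ^ κ * g (traj f s₁ e κ) - γ ^ κ * g (traj f s₂ e κ)| ≤ C := by
    intro g Lg hLg hg hle κ
    rw [← mul_sub, abs_mul, abs_pow, abs_of_pos hγ0]
    calc γ ^ κ * |g (traj f s₁ e κ) - g (traj f s₂ e κ)|
        ≤ γ ^ κ * (Lg * ((1 + Lf) ^ κ * ‖s₁ - s₂‖)) := by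
          apply mul_le_mul_of_nonneg_left _ (by positivity)
          exact (hg _ _).trans (mul_le_mul_of_nonneg_left (htraj κ) hLg)
      _ = Lg * (γ ^ κ * (1 + Lf) ^ κ) * ‖s₁ - s₂‖ := by ring
      _ ≤ Lg * 1 * ‖s₁ - s₂‖ := by
          apply mul_le_mul_of_nonneg_right _ hd.le
          exact mul_le_mul_of_nonneg_left (hpow κ) hLg
      _ ≤ C := by rw [mul_one, hC]; exact mul_le_mul_of_nonneg_right hle hd.le
  -- payoff bound
  have hpay : ∀ τ, |payoff f l ζ γ s₁ e τ - payoff f l ζ γ s₂ e τ| ≤ C := by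
    intro τ
    refine le_trans (abs_max_sub_max_le_max _ _ _ _) (max_le ?_ ?_)
    · exact hterm l Ll hLl hl (le_max_left _ _) τ
    · have hζterm := hterm ζ Lζ hLζ hζ (le_max_right _ _)
      rw [abs_sub_le_iff]
      constructor
      · rw [sub_le_iff_le_add]
        apply Finset.sup'_le
        intro κ hκ
        have h1 := (abs_le.mp (hζterm κ)).2
        have h2 := Finset.le_sup' (fun κ => γ ^ κ * ζ (traj f s₂ e κ)) hκ
        linarith
      · rw [sub_le_iff_le_add]
        apply Finset.sup'_le
        intro κ hκ
        have h1 := (abs_le.mp (hζterm κ)).1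
        have h2 := Finset.le_sup' (fun κ => γ ^ κ * ζ (traj f s₁ e κ)) hκ
        linarith
  -- payoffs bounded below
  have hbdd : ∀ s : EuclideanSpace ℝ (Fin n),
      BddBelow (Set.range fun τ => payoff f l ζ γ s e τ) := by
    intro s
    refine ⟨ζ s, ?_⟩
    rintro x ⟨τ, rfl⟩
    have h0 : ζ s = γ ^ 0 * ζ (traj f s e 0) := by simp [traj]
    calc ζ s ≤ (Finset.range (τ + 1)).sup' Finset.nonempty_range_add_one
          (fun κ => γ ^ κ * ζ (traj f s e κ)) := by
          rw [h0]
          exact Finset.le_sup' (fun κ => γ ^ κ * ζ (traj f s e κ))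
            (Finset.mem_range.mpr (Nat.succ_pos τ))
      _ ≤ payoff f l ζ γ s e τ := le_max_right _ _
  -- infimum comparison
  have hinf : ∀ p q : ℕ → ℝ, BddBelow (Set.range p) → (∀ τ, p τ ≤ q τ + C) →
      (⨅ τ, p τ) - (⨅ τ, q τ) ≤ C := by
    intro p q hbp hpq
    have h3 : (⨅ τ, p τ) - C ≤ ⨅ τ, q τ := by
      apply le_ciInf
      intro τ
      have h1 : (⨅ τ, p τ) ≤ p τ := ciInf_le hbp τ
      have h2 := hpq τ
      linarith
    linarith
  rw [abs_sub_le_iff]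
  constructor
  · exact hinf _ _ (hbdd s₁) (fun τ => by have := (abs_le.mp (hpay τ)).2; linarith)
  · exact hinf _ _ (hbdd s₂) (fun τ => by have := (abs_le.mp (hpay τ)).1; linarith)
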